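/- Let G be a finite simple graph on vertex set {1,…,n} (no self-loops) in which every vertex has at least one neighbor, with graph Laplacian L. Suppose L = U Σ Uᵀ where U ∈ ℝ^{n×n} and Σ ∈ ℝ^{n×n} is diagonal with nonnegative entries, and let Σ^{1/2} be the entrywise square root of Σ. Then for every permutation matrix M ∈ {0,1}^{n×n}, the matrix U Σ^{1/2} M satisfies (U Σ^{1/2} M)(U Σ^{1/2} M)ᵀ = L and is adjacency-identifying. -/

import Mathlib

open Matrix

/-- The unnormalized attention matrix `(1/√d_k)·(P W^Q)(P W^K)ᵀ`. -/
noncomputable def attn {n : ℕ} {m : Type*} [Fintype m] (dk : ℝ)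
    (P : Matrix (Fin n) m ℝ) (WQ WK : Matrix m m ℝ) : Matrix (Fin n) (Fin n) ℝ :=
  (1 / Real.sqrt dk) • ((P * WQ) * (P * WK)ᵀ)

/-- `P` is node-identifying: for some `W^Q, W^K`, the `(i,j)` entry of
`(1/√d_k)·(P W^Q)(P W^K)ᵀ` is a maximum of its row exactly when `i = j`. -/
def IsNodeIdentifying {n : ℕ} {m : Type*} [Fintype m] (dk : ℝ)
    (P : Matrix (Fin n) m ℝ) : Prop :=
  ∃ WQ WK : Matrix m m ℝ, ∀ i j,
    (∀ l, attn dk P WQ WK i l ≤ attn dk P WQ WK i j) ↔ i = j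

/-- `P` is adjacency-identifying: for some `W^Q, W^K`, the `(i,j)` entry of
`(1/√d_k)·(P W^Q)(P W^K)ᵀ` is a maximum of its row exactly when `i` and `j` are adjacent. -/
def IsAdjIdentifying {n : ℕ} {m : Type*} [Fintype m] (dk : ℝ) (G : SimpleGraph (Fin n))
    (P : Matrix (Fin n) m ℝ) : Prop :=
  ∃ WQ WK : Matrix m m ℝ, ∀ i j,
    (∀ l, attn dk P WQ WK i l ≤ attn dk P WQ WK i j) ↔ G.Adj i j

theorem perm_mul_transpose {n : ℕ} (M : Matrix (Fin n) (Fin n) ℝ)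
    (hM01 : ∀ i j, M i j = 0 ∨ M i j = 1)
    (hMrow : ∀ i, ∃! j, M i j = 1) (hMcol : ∀ j, ∃! i, M i j = 1) :
    M * Mᵀ = 1 := by
  ext i j
  simp only [mul_apply, transpose_apply, one_apply]
  obtain ⟨fi, hfi, hufi⟩ := hMrow i
  by_cases hij : i = j
  · subst hij
    simp only [if_pos rfl]
    rw [Finset.sum_eq_single fi]
    · rw [hfi]; norm_num
    · intro k _ hk
      rcases hM01 i k with h | h
      · rw [h]; ring
      · exact absurd (hufi k h) hk
    · simp
  · simp only [if_neg hij]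
    apply Finset.sum_eq_zero
    intro k _
    rcases hM01 i k with h | h
    · rw [h]; ring
    · rcases hM01 j k with h' | h'
      · rw [h']; ring
      · obtain ⟨ck, hck, huck⟩ := hMcol k
        exact absurd ((huck i h).trans (huck j h').symm) hij


/-- if `L = U Σ Uᵀ` with `Σ` diagonal nonnegative, then for every permutation
matrix `M`, the matrix `U Σ^{1/2} M` factors the Laplacian and is adjacency-identifying. -/
theorem stmt8 {n : ℕ} (G : SimpleGraph (Fin n)) [DecidableRel G.Adj]
    (hdeg : ∀ v, 0 < G.degree v) (dk : ℝ) (hdk : 0 < dk)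
    (U : Matrix (Fin n) (Fin n) ℝ) (σ : Fin n → ℝ) (hσ : ∀ i, 0 ≤ σ i)
    (hdecomp : G.lapMatrix ℝ = U * Matrix.diagonal σ * Uᵀ)
    (M : Matrix (Fin n) (Fin n) ℝ)
    (hM01 : ∀ i j, M i j = 0 ∨ M i j = 1)
    (hMrow : ∀ i, ∃! j, M i j = 1) (hMcol : ∀ j, ∃! i, M i j = 1) :
    (U * Matrix.diagonal (fun i => Real.sqrt (σ i)) * M) *
        (U * Matrix.diagonal (fun i => Real.sqrt (σ i)) * M)ᵀ = G.lapMatrix ℝ ∧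
      IsAdjIdentifying dk G (U * Matrix.diagonal (fun i => Real.sqrt (σ i)) * M) := by
  have hMM := perm_mul_transpose M hM01 hMrow hMcol
  set D := Matrix.diagonal (fun i => Real.sqrt (σ i)) with hD
  set P := U * D * M with hP
  have hDD : D * D = Matrix.diagonal σ := by
    rw [hD, Matrix.diagonal_mul_diagonal]
    exact congrArg Matrix.diagonal (funext fun i => Real.mul_self_sqrt (hσ i))
  have hfact : P * Pᵀ = G.lapMatrix ℝ := by
    have h1 : P * Pᵀ = U * D * (M * Mᵀ) * D * Uᵀ := by
      have hDt : Dᵀ = D := by rw [hD]; exact Matrix.diagonal_transpose _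
      rw [hP]
      simp only [Matrix.transpose_mul, hDt, Matrix.mul_assoc]
    rw [h1, hMM, Matrix.mul_one, Matrix.mul_assoc U D D, hDD, hdecomp]
  refine ⟨hfact, ?_⟩
  set c : ℝ := 1 / Real.sqrt dk with hc
  have hcpos : 0 < c := by
    rw [hc]; positivity
  have hL : ∀ i j, (G.lapMatrix ℝ) i j =
      (if i = j then (G.degree i : ℝ) else 0) - (if G.Adj i j then 1 else 0) := by
    intro i j
    simp [SimpleGraph.lapMatrix, SimpleGraph.degMatrix, SimpleGraph.adjMatrix,
      Matrix.diagonal, Matrix.of_apply]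
  refine ⟨-1, 1, ?_⟩
  have hattn : ∀ i j, attn dk P (-1) 1 i j = c * (-(G.lapMatrix ℝ i j)) := by
    intro i j
    simp only [attn, Matrix.mul_one, Matrix.mul_neg, Matrix.mul_one, Matrix.neg_mul,
      Matrix.smul_apply, Matrix.neg_apply, smul_eq_mul, ← hc]
    rw [hfact]
  intro i j
  have key : ∀ a b : Fin n, (attn dk P (-1) 1 i a ≤ attn dk P (-1) 1 i b ↔
      -(G.lapMatrix ℝ i a) ≤ -(G.lapMatrix ℝ i b)) := by
    intro a b
    rw [hattn, hattn]
    exact mul_le_mul_iff_right₀ hcpos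
  have hval : ∀ l, -(G.lapMatrix ℝ i l) =
      if G.Adj i l then 1 else (if i = l then -(G.degree i : ℝ) else 0) := by
    intro l
    rw [hL]
    by_cases h : G.Adj i l
    · rw [if_pos h, if_neg h.ne, if_pos h]; ring
    · rw [if_neg h, if_neg h]
      by_cases h' : i = l <;> simp [h']
  constructor
  · intro hmax
    obtain ⟨l0, hl0⟩ := (G.degree_pos_iff_exists_adj i).mp (hdeg i)
    have h1 := (key l0 j).mp (hmax l0)
    rw [hval, hval, if_pos hl0] at h1
    by_contra hadj
    rw [if_neg hadj] at h1
    by_cases h' : i = j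
    · rw [if_pos h'] at h1
      have : (0:ℝ) < (G.degree i : ℝ) := by exact_mod_cast hdeg i
      linarith
    · rw [if_neg h'] at h1; linarith
  · intro hadj l
    rw [key, hval, hval, if_pos hadj]
    by_cases h : G.Adj i l
    · rw [if_pos h]
    · rw [if_neg h]
      by_cases h' : i = l
      · rw [if_pos h']
        have : (0:ℝ) ≤ (G.degree i : ℝ) := by positivity
        linarith
      · rw [if_neg h']; norm_num
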